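/- Suppose additionally that V Vᵀ x_n = x_n for all n (the covariates lie in the R-dimensional column space of V). Then for every n = 1, …, N, the predictions of the full and restricted problems coincide: x_nᵀ θ_{∖n} = x̃_nᵀ φ_{∖n}, x_nᵀ θ̂_{IJ,∖n} = x̃_nᵀ φ̂_{IJ,∖n}, and x_nᵀ θ̂_{NS,∖n} = x̃_nᵀ φ̂_{NS,∖n}. -/

import Mathlib

open Matrix BigOperators RealInnerProductSpace

lemma aux_deriv_nonneg {g : ℝ → ℝ} (hm : Monotone g) {t : ℝ} (hd : DifferentiableAt ℝ g t) :
    0 ≤ deriv g t := by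
  have h := hd.hasDerivAt
  rw [hasDerivAt_iff_tendsto_slope] at h
  have h' : Filter.Tendsto (slope g t) (nhdsWithin t (Set.Ioi t)) (nhds (deriv g t)) :=
    h.mono_left (nhdsWithin_mono t (fun u hu => Set.mem_compl_singleton_iff.2 (ne_of_gt hu)))
  refine ge_of_tendsto h' ?_
  filter_upwards [self_mem_nhdsWithin] with u hu
  rw [slope_def_field]
  exact div_nonneg (sub_nonneg.2 (hm (le_of_lt hu))) (sub_nonneg.2 (le_of_lt hu))

lemma aux_second_nonneg {g : ℝ → ℝ} (hc : ConvexOn ℝ Set.univ g) (hs : ContDiff ℝ 2 g) (t : ℝ) :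
    0 ≤ iteratedDeriv 2 g t := by
  rw [show (2:ℕ) = 1+1 from rfl, iteratedDeriv_succ, iteratedDeriv_one]
  have hdiff : Differentiable ℝ g := hs.differentiable (by norm_num)
  have hmono : Monotone (deriv g) := by
    have := hc.monotoneOn_deriv (fun x _ => hdiff.differentiableAt)
    rwa [monotoneOn_univ] at this
  have hd2 : Differentiable ℝ (deriv g) := by
    have h2 : ContDiff ℝ ((1:ℕ∞)+1) g := by exact_mod_cast hs
    exact ((contDiff_succ_iff_deriv.mp h2).2.2).differentiable (by norm_num)
  exact aux_deriv_nonneg hmono (hd2 t)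

lemma aux_sum_mulVec {d k : ℕ} (s : Finset (Fin k)) (A : Fin k → Matrix (Fin d) (Fin d) ℝ)
    (z : Fin d → ℝ) : (∑ m ∈ s, A m) *ᵥ z = ∑ m ∈ s, A m *ᵥ z := by
  ext i
  simp only [Matrix.mulVec, dotProduct, Matrix.sum_apply, Finset.sum_apply, Finset.sum_mul]
  rw [Finset.sum_comm]

lemma aux_dotProduct_sum {d k : ℕ} (s : Finset (Fin k)) (v : Fin d → ℝ)
    (w : Fin k → Fin d → ℝ) : v ⬝ᵥ (∑ m ∈ s, w m) = ∑ m ∈ s, v ⬝ᵥ w m := by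
  simp only [dotProduct, Finset.sum_apply, Finset.mul_sum]
  rw [Finset.sum_comm]

lemma aux_vecMulVec_mulVec {d e : Type*} [Fintype e] (u : d → ℝ) (v z : e → ℝ) :
    Matrix.vecMulVec u v *ᵥ z = (v ⬝ᵥ z) • u := by
  ext i
  simp [Matrix.mulVec, Matrix.vecMulVec_apply, dotProduct, Finset.sum_mul, mul_comm,
    mul_assoc, mul_left_comm, Finset.mul_sum]

lemma aux_vecMulVec_mul {d e r : Type*} [Fintype e] (u : d → ℝ) (w : e → ℝ)
    (V : Matrix e r ℝ) : Matrix.vecMulVec u w * V = Matrix.vecMulVec u (Vᵀ *ᵥ w) := by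
  ext i j
  simp only [Matrix.mul_apply, Matrix.vecMulVec_apply, Matrix.mulVec, Matrix.transpose_apply,
    dotProduct, Finset.mul_sum]
  exact Finset.sum_congr rfl fun k _ => by ring

lemma aux_mul_vecMulVec {d e r : Type*} [Fintype e] (w : e → ℝ) (v : r → ℝ)
    (V : Matrix d e ℝ) : V * Matrix.vecMulVec w v = Matrix.vecMulVec (V *ᵥ w) v := by
  ext i j
  simp only [Matrix.mul_apply, Matrix.vecMulVec_apply, Matrix.mulVec, dotProduct,
    Finset.sum_mul]
  exact Finset.sum_congr rfl fun k _ => by ring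

lemma aux_posdef {d k : ℕ} (s : Finset (Fin k)) (c : Fin k → ℝ) (hc : ∀ m, 0 ≤ c m)
    (v : Fin k → Fin d → ℝ) (a lam : ℝ) (ha : 0 ≤ a) (hlam : 0 < lam) :
    (a • ∑ m ∈ s, c m • Matrix.vecMulVec (v m) (v m)
      + lam • (1 : Matrix (Fin d) (Fin d) ℝ)).PosDef := by
  apply Matrix.PosDef.posSemidef_add
  · refine Matrix.posSemidef_iff_dotProduct_mulVec.mpr ⟨?_, ?_⟩
    · show _ = _
      ext i j
      simp [Matrix.conjTranspose_apply, Matrix.sum_apply, Matrix.vecMulVec_apply, mul_comm]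
    · intro z
      have hz : star z = z := by simp
      rw [hz, Matrix.smul_mulVec, dotProduct_smul, smul_eq_mul]
      apply mul_nonneg ha
      rw [aux_sum_mulVec, aux_dotProduct_sum]
      apply Finset.sum_nonneg
      intro m hm
      rw [Matrix.smul_mulVec, dotProduct_smul, aux_vecMulVec_mulVec,
        dotProduct_smul, smul_eq_mul, smul_eq_mul]
      rw [dotProduct_comm z (v m)]
      exact mul_nonneg (hc m) (mul_self_nonneg _)
  · refine Matrix.posDef_iff_dotProduct_mulVec.mpr ⟨?_, ?_⟩
    · show _ = _
      ext i j
      simp [Matrix.conjTranspose_apply, Matrix.one_apply, eq_comm]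
    · intro z hz
      have hz' : star z = z := by simp
      rw [hz', Matrix.smul_mulVec, dotProduct_smul, Matrix.one_mulVec, smul_eq_mul]
      apply mul_pos hlam
      have h0 : (0:ℝ) ≤ z ⬝ᵥ z := Finset.sum_nonneg fun i _ => mul_self_nonneg _
      rcases h0.lt_or_eq with h | h
      · exact h
      · exact absurd ((dotProduct_self_eq_zero).1 h.symm) hz

theorem stmt_0
    (N D : ℕ) (hN : 1 ≤ N) (hD : 1 ≤ D)
    (x : Fin N → Fin D → ℝ) (y : Fin N → ℝ)
    (lam : ℝ) (hlam : 0 < lam)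
    (f : ℝ → ℝ → ℝ)
    (hconv : ∀ c : ℝ, ConvexOn ℝ Set.univ (fun z => f z c))
    (hsmooth : ∀ c : ℝ, ContDiff ℝ 2 (fun z => f z c))
    (F : (Fin D → ℝ) → ℝ)
    (hF : F = fun θ => (1 / N : ℝ) * ∑ n, f (x n ⬝ᵥ θ) (y n) + lam / 2 * (θ ⬝ᵥ θ))
    (Floo : Fin N → (Fin D → ℝ) → ℝ)
    (hFloo : ∀ n, Floo n = fun θ =>
      (1 / N : ℝ) * ∑ m ∈ Finset.univ.erase n, f (x m ⬝ᵥ θ) (y m) + lam / 2 * (θ ⬝ᵥ θ))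
    (θhat : Fin D → ℝ)
    (hθhat : ∀ θ, F θhat ≤ F θ)
    (hθhatU : ∀ θ, (∀ θ', F θ ≤ F θ') → θ = θhat)
    (θloo : Fin N → Fin D → ℝ)
    (hθloo : ∀ n θ, Floo n (θloo n) ≤ Floo n θ)
    (hθlooU : ∀ n θ, (∀ θ', Floo n θ ≤ Floo n θ') → θ = θloo n)
    (D1 : Fin N → ℝ)
    (hD1 : ∀ n, D1 n = deriv (fun z => f z (y n)) (x n ⬝ᵥ θhat))
    (D2 : Fin N → ℝ)
    (hD2 : ∀ n, D2 n = iteratedDeriv 2 (fun z => f z (y n)) (x n ⬝ᵥ θhat))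
    (H : Matrix (Fin D) (Fin D) ℝ)
    (hH : H = (1 / N : ℝ) • ∑ m, D2 m • Matrix.vecMulVec (x m) (x m) + lam • 1)
    (Hloo : Fin N → Matrix (Fin D) (Fin D) ℝ)
    (hHloo : ∀ n, Hloo n =
      (1 / N : ℝ) • ∑ m ∈ Finset.univ.erase n, D2 m • Matrix.vecMulVec (x m) (x m) + lam • 1)
    (θIJ : Fin N → Fin D → ℝ)
    (hθIJ : ∀ n, θIJ n = θhat + (D1 n / N) • (H⁻¹ *ᵥ x n))
    (θNS : Fin N → Fin D → ℝ)
    (hθNS : ∀ n, θNS n = θhat + (D1 n / N) • ((Hloo n)⁻¹ *ᵥ x n))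
    (R : ℕ)
    (V : Matrix (Fin D) (Fin R) ℝ) (hV : Vᵀ * V = 1)
    (xt : Fin N → Fin R → ℝ) (hxt : ∀ n, xt n = Vᵀ *ᵥ x n)
    (hproj : ∀ n, V *ᵥ (Vᵀ *ᵥ x n) = x n)
    (FR : (Fin R → ℝ) → ℝ)
    (hFR : FR = fun φ => (1 / N : ℝ) * ∑ n, f (xt n ⬝ᵥ φ) (y n) + lam / 2 * (φ ⬝ᵥ φ))
    (FRloo : Fin N → (Fin R → ℝ) → ℝ)
    (hFRloo : ∀ n, FRloo n = fun φ =>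
      (1 / N : ℝ) * ∑ m ∈ Finset.univ.erase n, f (xt m ⬝ᵥ φ) (y m) + lam / 2 * (φ ⬝ᵥ φ))
    (φhat : Fin R → ℝ)
    (hφhat : ∀ φ, FR φhat ≤ FR φ)
    (hφhatU : ∀ φ, (∀ φ', FR φ ≤ FR φ') → φ = φhat)
    (φloo : Fin N → Fin R → ℝ)
    (hφloo : ∀ n φ, FRloo n (φloo n) ≤ FRloo n φ)
    (hφlooU : ∀ n φ, (∀ φ', FRloo n φ ≤ FRloo n φ') → φ = φloo n)
    (Dt1 : Fin N → ℝ)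
    (hDt1 : ∀ n, Dt1 n = deriv (fun z => f z (y n)) (xt n ⬝ᵥ φhat))
    (Dt2 : Fin N → ℝ)
    (hDt2 : ∀ n, Dt2 n = iteratedDeriv 2 (fun z => f z (y n)) (xt n ⬝ᵥ φhat))
    (HR : Matrix (Fin R) (Fin R) ℝ)
    (hHR : HR = (1 / N : ℝ) • ∑ m, Dt2 m • Matrix.vecMulVec (xt m) (xt m) + lam • 1)
    (HRloo : Fin N → Matrix (Fin R) (Fin R) ℝ)
    (hHRloo : ∀ n, HRloo n =
      (1 / N : ℝ) • ∑ m ∈ Finset.univ.erase n, Dt2 m • Matrix.vecMulVec (xt m) (xt m) + lam • 1)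
    (φIJ : Fin N → Fin R → ℝ)
    (hφIJ : ∀ n, φIJ n = φhat + (Dt1 n / N) • (HR⁻¹ *ᵥ xt n))
    (φNS : Fin N → Fin R → ℝ)
    (hφNS : ∀ n, φNS n = φhat + (Dt1 n / N) • ((HRloo n)⁻¹ *ᵥ xt n))
    :
    ∀ n : Fin N,
      x n ⬝ᵥ θloo n = xt n ⬝ᵥ φloo n ∧
      x n ⬝ᵥ θIJ n = xt n ⬝ᵥ φIJ n ∧
      x n ⬝ᵥ θNS n = xt n ⬝ᵥ φNS n := by

  intro n
  -- basic dot-product identities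
  have dotV : ∀ (u : Fin D → ℝ) (φ : Fin R → ℝ), u ⬝ᵥ (V *ᵥ φ) = (Vᵀ *ᵥ u) ⬝ᵥ φ := by
    intro u φ
    rw [Matrix.dotProduct_mulVec, Matrix.mulVec_transpose]
  have hVxt : ∀ m, V *ᵥ xt m = x m := by
    intro m; rw [hxt]; exact hproj m
  have hVtV : ∀ (φ : Fin R → ℝ), Vᵀ *ᵥ (V *ᵥ φ) = φ := by
    intro φ; rw [Matrix.mulVec_mulVec, hV, Matrix.one_mulVec]
  have hxtdot : ∀ m (θ : Fin D → ℝ), xt m ⬝ᵥ (Vᵀ *ᵥ θ) = x m ⬝ᵥ θ := by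
    intro m θ
    rw [dotProduct_comm, ← dotV, hVxt, dotProduct_comm]
  have hnormV : ∀ (φ : Fin R → ℝ), (V *ᵥ φ) ⬝ᵥ (V *ᵥ φ) = φ ⬝ᵥ φ := by
    intro φ; rw [dotV, hVtV]
  have hquad : ∀ (θ : Fin D → ℝ), (Vᵀ *ᵥ θ) ⬝ᵥ (Vᵀ *ᵥ θ) ≤ θ ⬝ᵥ θ := by
    intro θ
    set p := V *ᵥ (Vᵀ *ᵥ θ) with hp
    have h1 : (Vᵀ *ᵥ θ) ⬝ᵥ (Vᵀ *ᵥ θ) = θ ⬝ᵥ p := (dotV θ _).symm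
    have h2 : p ⬝ᵥ p = θ ⬝ᵥ p := (hnormV _).trans h1
    have h3 : 0 ≤ (θ - p) ⬝ᵥ (θ - p) := Finset.sum_nonneg fun i _ => mul_self_nonneg _
    have h4 : (θ - p) ⬝ᵥ (θ - p) = θ ⬝ᵥ θ - 2*(θ ⬝ᵥ p) + p ⬝ᵥ p := by
      rw [sub_dotProduct, dotProduct_sub, dotProduct_sub,
        dotProduct_comm p θ]
      ring
    rw [h1]; nlinarith [h2, h3, h4]
  -- transfer of objective values
  have hNpos : (0:ℝ) < (N:ℝ) := by exact_mod_cast hN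
  have hsum_eq : ∀ (s : Finset (Fin N)) (φ : Fin R → ℝ),
      ∑ m ∈ s, f (x m ⬝ᵥ (V *ᵥ φ)) (y m) = ∑ m ∈ s, f (xt m ⬝ᵥ φ) (y m) := by
    intro s φ
    refine Finset.sum_congr rfl fun m _ => ?_
    rw [dotV, ← hxt]
  have hsum_eq' : ∀ (s : Finset (Fin N)) (θ : Fin D → ℝ),
      ∑ m ∈ s, f (xt m ⬝ᵥ (Vᵀ *ᵥ θ)) (y m) = ∑ m ∈ s, f (x m ⬝ᵥ θ) (y m) := by
    intro s θ
    refine Finset.sum_congr rfl fun m _ => ?_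
    rw [hxtdot]
  have hquad_le : ∀ (θ : Fin D → ℝ),
      lam / 2 * ((Vᵀ *ᵥ θ) ⬝ᵥ (Vᵀ *ᵥ θ)) ≤ lam / 2 * (θ ⬝ᵥ θ) :=
    fun θ => mul_le_mul_of_nonneg_left (hquad θ) (by positivity)
  have hFVφ : ∀ (φ : Fin R → ℝ), F (V *ᵥ φ) = FR φ := by
    intro φ; rw [hF, hFR]; dsimp only
    rw [hnormV, hsum_eq]
  have hFRle : ∀ (θ : Fin D → ℝ), FR (Vᵀ *ᵥ θ) ≤ F θ := by
    intro θ; rw [hF, hFR]; dsimp only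
    rw [hsum_eq']
    exact add_le_add_right (hquad_le θ) _
  have hFlooVφ : ∀ m (φ : Fin R → ℝ), Floo m (V *ᵥ φ) = FRloo m φ := by
    intro m φ; rw [hFloo, hFRloo]; dsimp only
    rw [hnormV, hsum_eq]
  have hFRlooLe : ∀ m (θ : Fin D → ℝ), FRloo m (Vᵀ *ᵥ θ) ≤ Floo m θ := by
    intro m θ; rw [hFloo, hFRloo]; dsimp only
    rw [hsum_eq']
    exact add_le_add_right (hquad_le θ) _
  -- minimizers correspond
  have hhat_eq : V *ᵥ φhat = θhat := by
    refine hθhatU _ fun θ' => ?_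
    calc F (V *ᵥ φhat) = FR φhat := hFVφ _
      _ ≤ FR (Vᵀ *ᵥ θ') := hφhat _
      _ ≤ F θ' := hFRle _
  have hloo_eq : ∀ m, V *ᵥ φloo m = θloo m := by
    intro m
    refine hθlooU m _ fun θ' => ?_
    calc Floo m (V *ᵥ φloo m) = FRloo m (φloo m) := hFlooVφ _ _
      _ ≤ FRloo m (Vᵀ *ᵥ θ') := hφloo _ _
      _ ≤ Floo m θ' := hFRlooLe _ _
  have hpredhat : ∀ m, x m ⬝ᵥ θhat = xt m ⬝ᵥ φhat := by
    intro m; rw [← hhat_eq, dotV, ← hxt]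
  have hD1eq : D1 n = Dt1 n := by rw [hD1, hDt1, hpredhat]
  have hD2eq : ∀ m, D2 m = Dt2 m := fun m => by rw [hD2, hDt2, hpredhat]
  have hD2nn : ∀ m, 0 ≤ D2 m := fun m => by
    rw [hD2]; exact aux_second_nonneg (hconv (y m)) (hsmooth (y m)) _
  have hDt2nn : ∀ m, 0 ≤ Dt2 m := fun m => (hD2eq m) ▸ hD2nn m
  -- matrix intertwining
  have hsumV : ∀ (s : Finset (Fin N)),
      (∑ m ∈ s, D2 m • Matrix.vecMulVec (x m) (x m)) * V
        = V * ∑ m ∈ s, Dt2 m • Matrix.vecMulVec (xt m) (xt m) := by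
    intro s
    rw [Matrix.sum_mul, Matrix.mul_sum]
    refine Finset.sum_congr rfl fun m _ => ?_
    rw [Matrix.smul_mul, Matrix.mul_smul, ← hD2eq m]
    congr 1
    rw [aux_vecMulVec_mul, aux_mul_vecMulVec, hVxt, ← hxt]
  have hHV : H * V = V * HR := by
    rw [hH, hHR, Matrix.add_mul, Matrix.mul_add, Matrix.smul_mul, Matrix.mul_smul,
      Matrix.smul_mul, Matrix.mul_smul, Matrix.one_mul, Matrix.mul_one, hsumV]
  have hHlooV : Hloo n * V = V * HRloo n := by
    rw [hHloo, hHRloo, Matrix.add_mul, Matrix.mul_add, Matrix.smul_mul, Matrix.mul_smul,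
      Matrix.smul_mul, Matrix.mul_smul, Matrix.one_mul, Matrix.mul_one, hsumV]
  -- invertibility
  have hinvN : (0:ℝ) ≤ 1 / (N:ℝ) := by positivity
  have hHdet : IsUnit H.det := by
    rw [hH]
    exact Matrix.isUnit_iff_isUnit_det _ |>.mp (aux_posdef _ _ hD2nn _ _ _ hinvN hlam).isUnit
  have hHRdet : IsUnit HR.det := by
    rw [hHR]
    exact Matrix.isUnit_iff_isUnit_det _ |>.mp (aux_posdef _ _ hDt2nn _ _ _ hinvN hlam).isUnit
  have hHlooDet : IsUnit (Hloo n).det := by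
    rw [hHloo]
    exact Matrix.isUnit_iff_isUnit_det _ |>.mp (aux_posdef _ _ hD2nn _ _ _ hinvN hlam).isUnit
  have hHRlooDet : IsUnit (HRloo n).det := by
    rw [hHRloo]
    exact Matrix.isUnit_iff_isUnit_det _ |>.mp (aux_posdef _ _ hDt2nn _ _ _ hinvN hlam).isUnit
  have hinv_intertwine : ∀ (A : Matrix (Fin D) (Fin D) ℝ) (B : Matrix (Fin R) (Fin R) ℝ),
      IsUnit A.det → IsUnit B.det → A * V = V * B → A⁻¹ * V = V * B⁻¹ := by
    intro A B hA hB hAB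
    have h2 : A * (V * B⁻¹) = V := by
      rw [← Matrix.mul_assoc, hAB, Matrix.mul_assoc, Matrix.mul_nonsing_inv _ hB,
        Matrix.mul_one]
    calc A⁻¹ * V = A⁻¹ * (A * (V * B⁻¹)) := by rw [h2]
      _ = V * B⁻¹ := by
        rw [← Matrix.mul_assoc, Matrix.nonsing_inv_mul _ hA, Matrix.one_mul]
  have hdot_inv : ∀ (A : Matrix (Fin D) (Fin D) ℝ) (B : Matrix (Fin R) (Fin R) ℝ),
      A⁻¹ * V = V * B⁻¹ → x n ⬝ᵥ (A⁻¹ *ᵥ x n) = xt n ⬝ᵥ (B⁻¹ *ᵥ xt n) := by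
    intro A B h
    have : A⁻¹ *ᵥ x n = V *ᵥ (B⁻¹ *ᵥ xt n) := by
      rw [← hVxt n, Matrix.mulVec_mulVec, h, ← Matrix.mulVec_mulVec]
    rw [this, dotV, ← hxt]
  have hIJdot : x n ⬝ᵥ (H⁻¹ *ᵥ x n) = xt n ⬝ᵥ (HR⁻¹ *ᵥ xt n) :=
    hdot_inv _ _ (hinv_intertwine _ _ hHdet hHRdet hHV)
  have hNSdot : x n ⬝ᵥ ((Hloo n)⁻¹ *ᵥ x n) = xt n ⬝ᵥ ((HRloo n)⁻¹ *ᵥ xt n) :=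
    hdot_inv _ _ (hinv_intertwine _ _ hHlooDet hHRlooDet hHlooV)
  refine ⟨?_, ?_, ?_⟩
  · rw [← hloo_eq n, dotV, ← hxt]
  · rw [hθIJ, hφIJ, dotProduct_add, dotProduct_add, dotProduct_smul,
      dotProduct_smul, hpredhat, hD1eq, hIJdot]
  · rw [hθNS, hφNS, dotProduct_add, dotProduct_add, dotProduct_smul,
      dotProduct_smul, hpredhat, hD1eq, hNSdot]
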